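/- arXiv:1203.6559 — 2 statements merged into one kernel-verified Lean document; each statement's English description precedes it below -/
import Mathlib

section
/- On a board of isolated stacks of heights one and two where every group has two or four tiles and no blocked cycle exists, the greedy strategy 'while the board is nonempty, play a match that introduces no new blocked cycle' always terminates with the empty board; in particular such a match always exists at every stage. -/
/-- A board is a finite multiset of isolated stacks; each stack is a list of
tile groups, with the head of the list being the top tile of the stack. -/
abbrev Board (G : Type*) := Multiset (List G)

variable {G : Type*} [DecidableEq G]

/-- The number of tiles of group `g` remaining on the board. -/
def tileCount (B : Board G) (g : G) : ℕ := (B.map (fun s => s.count g)).sum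

/-- The total number of tiles on the board. -/
def totalTiles (B : Board G) : ℕ := (B.map List.length).sum

/-- The board obtained by removing the (playable) top tiles of stacks `s₁` and
`s₂`, the remaining stacks being `rest`; emptied stacks disappear. -/
def play (s₁ s₂ : List G) (rest : Board G) : Board G :=
  Multiset.filter (fun s => s ≠ []) (s₁.tail ::ₘ s₂.tail ::ₘ rest)

/-- A legal move: remove two playable (top) tiles of the same group. -/
def Move (B B' : Board G) : Prop :=
  ∃ (g : G) (s₁ s₂ : List G) (rest : Board G),
    B = s₁ ::ₘ s₂ ::ₘ rest ∧ s₁.head? = some g ∧ s₂.head? = some g ∧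
    B' = play s₁ s₂ rest

/-- A board is solvable iff some sequence of legal moves empties it. -/
def Solvable (B : Board G) : Prop := Relation.ReflTransGen Move B 0

/-- All stacks are nonempty and of height at most two. -/
def HeightsOK (B : Board G) : Prop := ∀ s ∈ B, s ≠ [] ∧ s.length ≤ 2

/-- A blocked cycle: distinct groups `p 0, …, p k`, each with exactly two
remaining tiles, such that for each `i` there is a height-two stack with a
`p (i+1)`-tile (cyclically) on top of a `p i`-tile. -/
def BlockedCycle (B : Board G) {k : ℕ} (p : Fin (k + 1) → G) : Prop :=
  Function.Injective p ∧ (∀ i, tileCount B (p i) = 2) ∧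
    ∀ i, [p (i + 1), p i] ∈ B

/-- The board contains some blocked cycle. -/
def HasBlockedCycle (B : Board G) : Prop :=
  ∃ (k : ℕ) (p : Fin (k + 1) → G), BlockedCycle B p

-- chunk 1
lemma tileCount_add (B C : Board G) (g : G) :
    tileCount (B + C) g = tileCount B g + tileCount C g := by
  simp [tileCount]

lemma tileCount_cons (s : List G) (B : Board G) (g : G) :
    tileCount (s ::ₘ B) g = s.count g + tileCount B g := by
  simp [tileCount]

lemma tileCount_le_of_le {B C : Board G} (h : B ≤ C) (g : G) :
    tileCount B g ≤ tileCount C g := by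
  obtain ⟨D, rfl⟩ := Multiset.le_iff_exists_add.mp h
  simp [tileCount_add]

lemma exists_mem_of_tileCount_pos {B : Board G} {g : G} (h : 0 < tileCount B g) :
    ∃ s ∈ B, g ∈ s := by
  by_contra hc
  push_neg at hc
  have : tileCount B g = 0 := by
    apply Multiset.sum_eq_zero
    intro x hx
    obtain ⟨s, hs, rfl⟩ := Multiset.mem_map.mp hx
    simpa [List.count_eq_zero] using hc s hs
  omega

lemma tileCount_split (B : Board G) (a : G) :
    tileCount B a = (B.map List.head?).count (some a)
      + (B.bind fun s => (s.tail : Multiset G)).count a := by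
  induction B using Multiset.induction_on with
  | empty => simp [tileCount]
  | cons s B ih =>
    rcases s with _ | ⟨h, t⟩
    · simpa [tileCount_cons] using ih
    · rw [tileCount_cons, ih]
      simp only [Multiset.map_cons, Multiset.bind_cons, Multiset.count_cons,
        Multiset.count_add, Multiset.coe_count, List.head?_cons, List.tail_cons,
        List.count_cons]
      by_cases hh : h = a
      · subst hh; simp; ring
      · simp [hh, Ne.symm hh]; ring

lemma totalTiles_cons (s : List G) (B : Board G) :
    totalTiles (s ::ₘ B) = s.length + totalTiles B := by simp [totalTiles]

-- chunk 2
lemma mem_play {s₁ s₂ : List G} {rest : Board G} {u : List G} :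
    u ∈ play s₁ s₂ rest ↔ (u = s₁.tail ∨ u = s₂.tail ∨ u ∈ rest) ∧ u ≠ [] := by
  simp [play, Multiset.mem_filter]

lemma two_stack_play {s₁ s₂ : List G} {rest : Board G} {a b : G}
    (h₁ : s₁.length ≤ 2) (h₂ : s₂.length ≤ 2)
    (h : [a, b] ∈ play s₁ s₂ rest) : [a, b] ∈ rest := by
  rcases (mem_play.mp h).1 with h | h | h
  · exfalso
    have := congrArg List.length h
    simp [List.length_tail] at this
    omega
  · exfalso
    have := congrArg List.length h
    simp [List.length_tail] at this
    omega
  · exact h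

lemma tileCount_filter_ne (C : Board G) (h : G) :
    tileCount (C.filter (fun s => s ≠ [])) h = tileCount C h := by
  conv_rhs => rw [← Multiset.filter_add_not (fun s => s ≠ []) C]
  rw [tileCount_add]
  have : tileCount (C.filter (fun s => ¬ s ≠ [])) h = 0 := by
    apply Multiset.sum_eq_zero
    intro x hx
    obtain ⟨s, hs, rfl⟩ := Multiset.mem_map.mp hx
    have := (Multiset.mem_filter.mp hs).2
    simp at this
    simp [this]
  omega

lemma head_cons_tail {s : List G} {g : G} (h : s.head? = some g) : s = g :: s.tail := by
  cases s with
  | nil => simp at h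
  | cons a t => simp at h; simp [h]

lemma tileCount_play_eq {s₁ s₂ : List G} {rest : Board G} {g : G}
    (h1 : s₁.head? = some g) (h2 : s₂.head? = some g) (h : G) :
    tileCount (s₁ ::ₘ s₂ ::ₘ rest) h
      = tileCount (play s₁ s₂ rest) h + (if h = g then 2 else 0) := by
  rw [play, tileCount_filter_ne]
  rw [tileCount_cons, tileCount_cons, tileCount_cons, tileCount_cons]
  rw [head_cons_tail h1, head_cons_tail h2]
  simp only [List.count_cons, List.tail_cons]
  by_cases hh : h = g
  · simp [hh]; ring
  · simp [hh, Ne.symm hh]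

lemma totalTiles_filter_ne (C : Board G) :
    totalTiles (C.filter (fun s => s ≠ [])) = totalTiles C := by
  conv_rhs => rw [← Multiset.filter_add_not (fun s => s ≠ []) C]
  have h0 : totalTiles (C.filter (fun s => ¬ s ≠ [])) = 0 := by
    apply Multiset.sum_eq_zero
    intro x hx
    obtain ⟨s, hs, rfl⟩ := Multiset.mem_map.mp hx
    have := (Multiset.mem_filter.mp hs).2
    simp at this
    simp [this]
  simp [totalTiles] at h0 ⊢
  omega

lemma totalTiles_play_eq {s₁ s₂ : List G} {rest : Board G} {g : G}
    (h1 : s₁.head? = some g) (h2 : s₂.head? = some g) :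
    totalTiles (s₁ ::ₘ s₂ ::ₘ rest)
      = totalTiles (play s₁ s₂ rest) + 2 := by
  rw [play, totalTiles_filter_ne, totalTiles_cons, totalTiles_cons,
    totalTiles_cons, totalTiles_cons]
  rw [head_cons_tail h1, head_cons_tail h2]
  simp [List.length_cons]
  ring

lemma heightsOK_play {s₁ s₂ : List G} {rest : Board G}
    (hH : HeightsOK (s₁ ::ₘ s₂ ::ₘ rest)) : HeightsOK (play s₁ s₂ rest) := by
  intro u hu
  obtain ⟨hmem, hne⟩ := mem_play.mp hu
  refine ⟨hne, ?_⟩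
  have l1 : s₁.length ≤ 2 := (hH s₁ (Multiset.mem_cons_self _ _)).2
  have l2 : s₂.length ≤ 2 := (hH s₂ (Multiset.mem_cons.mpr
    (Or.inr (Multiset.mem_cons_self _ _)))).2
  rcases hmem with h | h | h
  · subst h; simp [List.length_tail]; omega
  · subst h; simp [List.length_tail]; omega
  · exact (hH u (Multiset.mem_cons.mpr (Or.inr (Multiset.mem_cons.mpr (Or.inr h))))).2

-- chunk 3: pin lemmas
lemma triple_le {C : Board G} {s u v : List G} (hs : s ∈ C)
    (hu : u ∈ C.erase s) (hv : v ∈ (C.erase s).erase u) :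
    s ::ₘ u ::ₘ {v} ≤ C := by
  rw [← Multiset.cons_erase hs, ← Multiset.cons_erase hu,
    ← Multiset.cons_erase hv]
  exact Multiset.cons_le_cons _ (Multiset.cons_le_cons _
    (Multiset.cons_le_cons _ (Multiset.zero_le _)))

lemma tileCount_triple (s u v : List G) (a : G) :
    tileCount (s ::ₘ u ::ₘ {v}) a = s.count a + u.count a + v.count a := by
  simp [tileCount]; ring

lemma pin {B : Board G} {a : G} {sT sB : List G} (h2 : tileCount B a = 2)
    (hT : sT ∈ B) (haT : a ∈ sT) (hB : sB ∈ B) (haB : a ∈ sB) (hne : sT ≠ sB)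
    {s : List G} (hs : s ∈ B) (ha : a ∈ s) : s = sT ∨ s = sB := by
  by_contra hc
  push_neg at hc
  obtain ⟨h1, h2'⟩ := hc
  have hB' : sB ∈ B.erase sT := (Multiset.mem_erase_of_ne (Ne.symm hne)).mpr hB
  have hs' : s ∈ (B.erase sT).erase sB :=
    (Multiset.mem_erase_of_ne h2').mpr ((Multiset.mem_erase_of_ne h1).mpr hs)
  have hle := triple_le hT hB' hs'
  have := tileCount_le_of_le hle a
  rw [tileCount_triple, h2] at this
  have c1 := List.count_pos_iff.mpr haT
  have c2 := List.count_pos_iff.mpr haB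
  have c3 := List.count_pos_iff.mpr ha
  omega

lemma pin_count {B : Board G} {a : G} {sT sB : List G} (h2 : tileCount B a = 2)
    (hT : sT ∈ B) (haT : a ∈ sT) (hB : sB ∈ B) (haB : a ∈ sB) (hne : sT ≠ sB) :
    B.count sT = 1 := by
  have h1 : 1 ≤ B.count sT := Multiset.one_le_count_iff_mem.mpr hT
  by_contra hc
  have h2c : 2 ≤ B.count sT := by omega
  have hT2 : sT ∈ B.erase sT := by
    rw [← Multiset.count_pos, Multiset.count_erase_self]
    omega
  have hB' : sB ∈ (B.erase sT).erase sT := by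
    rw [Multiset.mem_erase_of_ne (Ne.symm hne)]
    exact (Multiset.mem_erase_of_ne (Ne.symm hne)).mpr hB
  have hle := triple_le hT hT2 hB'
  have := tileCount_le_of_le hle a
  rw [tileCount_triple, h2] at this
  have c1 := List.count_pos_iff.mpr haT
  have c2 := List.count_pos_iff.mpr haB
  omega

-- chunk 4: buildCycle and cycle transfer
lemma fin_val_add_one {k : ℕ} (i : Fin (k+1)) :
    ((i + 1 : Fin (k+1)) : ℕ) = (i.val + 1) % (k+1) := by
  rw [Fin.val_add, Fin.val_one', Nat.add_mod_mod]

lemma buildCycle {B : Board G} (m : ℕ) (hm : 0 < m) (q : ℕ → G)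
    (hinj : ∀ i < m, ∀ j < m, q i = q j → i = j)
    (hcnt : ∀ i < m, tileCount B (q i) = 2)
    (hstk : ∀ i < m, [q ((i+1) % m), q i] ∈ B) : HasBlockedCycle B := by
  obtain ⟨k, rfl⟩ : ∃ k, m = k + 1 := ⟨m - 1, by omega⟩
  refine ⟨k, fun i => q i.val, ?_, ?_, ?_⟩
  · intro i j hij
    exact Fin.ext (hinj _ i.isLt _ j.isLt hij)
  · intro i; exact hcnt _ i.isLt
  · intro i
    have h := hstk i.val i.isLt
    have hv : ((i + 1 : Fin (k+1)) : ℕ) = (i.val + 1) % (k+1) := fin_val_add_one i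
    simpa [hv] using h

lemma cycle_transfer {g : G} {s₁ s₂ : List G} {rest : Board G} {k : ℕ}
    {p : Fin (k+1) → G}
    (hH : HeightsOK (s₁ ::ₘ s₂ ::ₘ rest))
    (h1 : s₁.head? = some g) (h2 : s₂.head? = some g)
    (hp : BlockedCycle (play s₁ s₂ rest) p) (hg : ∀ i, p i ≠ g) :
    BlockedCycle (s₁ ::ₘ s₂ ::ₘ rest) p := by
  obtain ⟨hinj, hcnt, hstk⟩ := hp
  have l1 : s₁.length ≤ 2 := (hH s₁ (Multiset.mem_cons_self _ _)).2
  have l2 : s₂.length ≤ 2 := (hH s₂ (Multiset.mem_cons.mpr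
    (Or.inr (Multiset.mem_cons_self _ _)))).2
  refine ⟨hinj, ?_, ?_⟩
  · intro i
    rw [tileCount_play_eq h1 h2, hcnt, if_neg (hg i)]
  · intro i
    have := two_stack_play l1 l2 (hstk i)
    exact Multiset.mem_cons.mpr (Or.inr (Multiset.mem_cons.mpr (Or.inr this)))

-- chunk 5: heads and bottoms
def headsOf (B : Board G) : Multiset (Option G) := B.map List.head?

def botsOf (B : Board G) : Multiset G := B.bind fun s => (s.tail : Multiset G)

lemma headsOf_cons (s : List G) (C : Board G) :
    headsOf (s ::ₘ C) = s.head? ::ₘ headsOf C := by simp [headsOf]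

lemma botsOf_cons (s : List G) (C : Board G) :
    botsOf (s ::ₘ C) = (s.tail : Multiset G) + botsOf C := by simp [botsOf]

lemma tileCount_split' (B : Board G) (a : G) :
    tileCount B a = (headsOf B).count (some a) + (botsOf B).count a :=
  tileCount_split B a

lemma botsOf_le {C B : Board G} (h : C ≤ B) : botsOf C ≤ botsOf B := by
  obtain ⟨D, rfl⟩ := Multiset.le_iff_exists_add.mp h
  show C.bind _ ≤ (C + D).bind _
  rw [Multiset.add_bind]
  exact Multiset.le_add_right _ _

lemma headsOf_le {C B : Board G} (h : C ≤ B) : headsOf C ≤ headsOf B :=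
  Multiset.map_le_map h

lemma mem_botsOf {B : Board G} {g : G} : g ∈ botsOf B ↔ ∃ s ∈ B, g ∈ s.tail := by
  simp [botsOf]

lemma bot_stack {B : Board G} (hH : HeightsOK B) {s : List G} {g : G}
    (hs : s ∈ B) (hg : g ∈ s.tail) : ∃ c, s = [c, g] := by
  obtain ⟨hne, hlen⟩ := hH s hs
  match s, hne with
  | [a], _ => simp at hg
  | a :: b :: t, _ =>
    simp at hlen
    have ht : t = [] := by
      cases t with
      | nil => rfl
      | cons x xs => simp at hlen
    subst ht
    simp at hg
    exact ⟨a, by simp [hg]⟩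

lemma pair_le {C : Board G} {s u : List G} (hs : s ∈ C) (hu : u ∈ C) (hne : s ≠ u) :
    s ::ₘ {u} ≤ C := by
  rw [← Multiset.cons_erase hs]
  exact Multiset.cons_le_cons _
    (Multiset.singleton_le.mpr ((Multiset.mem_erase_of_ne (Ne.symm hne)).mpr hu))

lemma pair_le_self {C : Board G} {s : List G} (h : 2 ≤ C.count s) :
    s ::ₘ {s} ≤ C := by
  rw [Multiset.le_iff_count]
  intro u
  by_cases hu : u = s
  · subst hu; simpa using h
  · simp [Multiset.count_cons, Multiset.count_singleton, hu]

/-- bottom uniqueness when `g` has exactly one buried tile -/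
lemma botUnique {B : Board G} {g : G} (h1 : (botsOf B).count g = 1)
    {c c' : G} (hc : [c, g] ∈ B) (hc' : [c', g] ∈ B) : c = c' := by
  by_contra hne
  have hpair : ([c, g] ::ₘ {[c', g]} : Board G) ≤ B :=
    pair_le hc hc' (by simp [hne])
  have h2 : (botsOf ([c, g] ::ₘ {[c', g]} : Board G)).count g = 2 := by
    simp [botsOf]
  have hle := Multiset.count_le_of_le g (botsOf_le hpair)
  rw [h2, h1] at hle
  omega

lemma botOccUnique {B : Board G} {g : G} (h1 : (botsOf B).count g = 1)
    {c : G} (hc : [c, g] ∈ B) : B.count [c, g] = 1 := by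
  have hle1 : 1 ≤ B.count [c, g] := Multiset.one_le_count_iff_mem.mpr hc
  by_contra hcnt
  have hp : ([c, g] ::ₘ {[c, g]} : Board G) ≤ B := pair_le_self (by omega)
  have h2 : (botsOf ([c, g] ::ₘ {[c, g]} : Board G)).count g = 2 := by
    simp [botsOf]
  have hle := Multiset.count_le_of_le g (botsOf_le hp)
  rw [h2, h1] at hle
  omega

lemma exists_second_head {B : Board G} {g : G} {s : List G} (hs : s ∈ B)
    (hcnt : 2 ≤ (headsOf B).count (some g)) :
    ∃ s₂ rest, B = s ::ₘ s₂ ::ₘ rest ∧ s₂.head? = some g := by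
  have hB : B = s ::ₘ B.erase s := (Multiset.cons_erase hs).symm
  have key : (headsOf B).count (some g)
      ≤ 1 + (headsOf (B.erase s)).count (some g) := by
    conv_lhs => rw [hB]
    rw [headsOf_cons, Multiset.count_cons]
    split <;> omega
  have hpos : 0 < (headsOf (B.erase s)).count (some g) := by omega
  obtain ⟨s₂, hs₂, hhd⟩ := Multiset.mem_map.mp (Multiset.count_pos.mp hpos)
  refine ⟨s₂, (B.erase s).erase s₂, ?_, hhd⟩
  conv_lhs => rw [hB]
  congr 1
  exact (Multiset.cons_erase hs₂).symm

lemma exists_match {B : Board G} {g : G} (hcnt : 2 ≤ (headsOf B).count (some g)) :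
    ∃ s₁ s₂ rest, B = s₁ ::ₘ s₂ ::ₘ rest ∧ s₁.head? = some g ∧ s₂.head? = some g := by
  have h1 : some g ∈ headsOf B := Multiset.count_pos.mp (by omega)
  obtain ⟨s₁, hs₁, hhd₁⟩ := Multiset.mem_map.mp h1
  obtain ⟨s₂, rest, hB, hhd₂⟩ := exists_second_head hs₁ hcnt
  exact ⟨s₁, s₂, rest, hB, hhd₁, hhd₂⟩

-- chunk 6: a match exists on a nonempty cycle-free board
lemma match_exists {B : Board G} (hne : B ≠ 0) (hH : HeightsOK B)
    (hs : ∀ g : G, tileCount B g = 0 ∨ tileCount B g = 2 ∨ tileCount B g = 4)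
    (hnc : ¬ HasBlockedCycle B) :
    ∃ g : G, 2 ≤ (headsOf B).count (some g) := by
  by_contra hcon
  push_neg at hcon
  have hc : ∀ g : G, (headsOf B).count (some g) ≤ 1 := fun g => by
    have := hcon g; omega
  have hnone : (headsOf B).count none = 0 := by
    rw [Multiset.count_eq_zero]
    intro hmem
    obtain ⟨s, hs', hh⟩ := Multiset.mem_map.mp hmem
    exact (hH s hs').1 (List.head?_eq_none_iff.mp hh)
  have hnodup : (headsOf B).Nodup := by
    rw [Multiset.nodup_iff_count_le_one]
    intro o
    cases o with
    | none => omega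
    | some g => exact hc g
  have hcardH : Multiset.card (headsOf B) = Multiset.card B := by simp [headsOf]
  have hcardB : Multiset.card (botsOf B) ≤ Multiset.card B := by
    rw [botsOf, Multiset.card_bind]
    have := Multiset.sum_le_card_nsmul (B.map (Multiset.card ∘ fun s => (s.tail : Multiset G))) 1 ?_
    · simpa using this
    · intro x hx
      obtain ⟨s, hsB, rfl⟩ := Multiset.mem_map.mp hx
      have := (hH s hsB).2
      simp [List.length_tail]
      omega
  have hHB : ∀ g, some g ∈ headsOf B → g ∈ botsOf B := by
    intro g hg
    have h1 : 1 ≤ (headsOf B).count (some g) := Multiset.one_le_count_iff_mem.mpr hg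
    have ht := tileCount_split' B g
    have h2 := hc g
    rcases hs g with h | h | h <;>
      [omega; skip; skip] <;>
      · rw [← Multiset.count_pos]
        omega
  classical
  set Hf := (headsOf B).toFinset with hHf
  set Bf := (botsOf B).toFinset with hBf
  have hsub : Hf ⊆ Bf.image some := by
    intro o ho
    have homem : o ∈ headsOf B := Multiset.mem_toFinset.mp ho
    cases o with
    | none =>
      exfalso
      rw [← Multiset.count_pos, hnone] at homem
      omega
    | some g =>
      exact Finset.mem_image_of_mem some
        (Multiset.mem_toFinset.mpr (hHB g homem))
  have hc1 : Hf.card = Multiset.card B := by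
    rw [hHf, Multiset.toFinset_card_eq_card_iff_nodup.mpr hnodup, hcardH]
  have hc2 : (Bf.image some).card = Bf.card :=
    Finset.card_image_of_injective _ (Option.some_injective G)
  have hc3 : Bf.card ≤ Multiset.card (botsOf B) := Multiset.toFinset_card_le _
  have hchain : Multiset.card B ≤ Bf.card := by
    have := Finset.card_le_card hsub
    omega
  have hbcard : Bf.card = Multiset.card (botsOf B) := by omega
  have hbnodup : (botsOf B).Nodup :=
    Multiset.toFinset_card_eq_card_iff_nodup.mp hbcard
  have hHfeq : Hf = Bf.image some :=
    Finset.eq_of_subset_of_card_le hsub (by omega)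
  have hBH : ∀ g ∈ botsOf B, some g ∈ headsOf B := by
    intro g hg
    have h1 : some g ∈ Bf.image some :=
      Finset.mem_image_of_mem some (Multiset.mem_toFinset.mpr hg)
    rw [← hHfeq] at h1
    exact Multiset.mem_toFinset.mp h1
  have hcnt2 : ∀ g, some g ∈ headsOf B → tileCount B g = 2 := by
    intro g hg
    have e1 : (headsOf B).count (some g) = 1 :=
      Multiset.count_eq_one_of_mem hnodup hg
    have e2 : (botsOf B).count g = 1 :=
      Multiset.count_eq_one_of_mem hbnodup (hHB g hg)
    rw [tileCount_split', e1, e2]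
  let f : G → G := fun g => if h : ∃ c, [c, g] ∈ B then h.choose else g
  have hf : ∀ g, some g ∈ headsOf B → [f g, g] ∈ B ∧ some (f g) ∈ headsOf B := by
    intro g hg
    have hb : g ∈ botsOf B := hHB g hg
    obtain ⟨s, hsB, hgt⟩ := mem_botsOf.mp hb
    obtain ⟨cc, rfl⟩ := bot_stack hH hsB hgt
    have hex : ∃ c', [c', g] ∈ B := ⟨cc, hsB⟩
    have hfg : [f g, g] ∈ B := by
      show [dite _ _ _, g] ∈ B
      rw [dif_pos hex]
      exact hex.choose_spec
    exact ⟨hfg, Multiset.mem_map.mpr ⟨[f g, g], hfg, rfl⟩⟩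
  obtain ⟨s₀, hs₀⟩ := Multiset.exists_mem_of_ne_zero hne
  obtain ⟨a₀, ha₀⟩ : ∃ a, s₀.head? = some a := by
    cases s₀ with
    | nil => exact absurd rfl (hH _ hs₀).1
    | cons x t => exact ⟨x, rfl⟩
  have hit : ∀ n, some (f^[n] (a₀ : G)) ∈ headsOf B := by
    intro n
    induction n with
    | zero => exact Multiset.mem_map.mpr ⟨s₀, hs₀, ha₀⟩
    | succ n ih =>
      rw [Function.iterate_succ_apply']
      exact (hf _ ih).2
  have main : ∀ i j : ℕ, i < j → f^[i] a₀ = f^[j] a₀ → HasBlockedCycle B := by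
    intro i j hij heq
    set c := f^[i] a₀ with hcdef
    have hper : Function.IsPeriodicPt f (j - i) c := by
      show f^[j - i] c = c
      rw [hcdef, ← Function.iterate_add_apply, Nat.sub_add_cancel (le_of_lt hij)]
      exact heq.symm
    have hmpos : 0 < Function.minimalPeriod f c :=
      hper.minimalPeriod_pos (by omega)
    set m := Function.minimalPeriod f c with hm
    have hitc : ∀ n, some (f^[n] c) ∈ headsOf B := by
      intro n
      rw [hcdef, ← Function.iterate_add_apply]
      exact hit _
    apply buildCycle m hmpos (fun n => f^[n] c)
    · intro a ha b hb hab
      exact Function.iterate_injOn_Iio_minimalPeriod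
        (Set.mem_Iio.mpr ha) (Set.mem_Iio.mpr hb) hab
    · intro a _
      exact hcnt2 _ (hitc a)
    · intro a _
      rw [Function.iterate_mod_minimalPeriod_eq, Function.iterate_succ_apply']
      exact (hf _ (hitc a)).1
  apply hnc
  have hmaps : ∀ n ∈ Finset.range (Bf.card + 1), f^[n] a₀ ∈ Bf := by
    intro n _
    exact Multiset.mem_toFinset.mpr (hHB _ (hit n))
  obtain ⟨i, _, j, _, hij, heq⟩ :=
    Finset.exists_ne_map_eq_of_card_lt_of_maps_to (by simp) hmaps
  rcases lt_or_gt_of_ne hij with h | h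
  · exact main i j h heq
  · exact main j i h heq.symm

-- chunk 7: safety machinery
lemma play_two_stack {s₁ s₂ : List G} {rest : Board G} {a b : G}
    (hH : HeightsOK (s₁ ::ₘ s₂ ::ₘ rest)) (hm : [a, b] ∈ play s₁ s₂ rest) :
    [a, b] ∈ rest :=
  two_stack_play (hH s₁ (Multiset.mem_cons_self _ _)).2
    (hH s₂ (Multiset.mem_cons.mpr (Or.inr (Multiset.mem_cons_self _ _)))).2 hm

lemma mem_rest_mem {s₁ s₂ : List G} {rest : Board G} {u : List G}
    (h : u ∈ rest) : u ∈ s₁ ::ₘ s₂ ::ₘ rest :=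
  Multiset.mem_cons_of_mem (Multiset.mem_cons_of_mem h)

lemma safe_of_count2 {g : G} {s₁ s₂ : List G} {rest : Board G}
    (hH : HeightsOK (s₁ ::ₘ s₂ ::ₘ rest))
    (hnc : ¬ HasBlockedCycle (s₁ ::ₘ s₂ ::ₘ rest))
    (h1 : s₁.head? = some g) (h2 : s₂.head? = some g)
    (hcnt : tileCount (s₁ ::ₘ s₂ ::ₘ rest) g = 2) :
    ¬ HasBlockedCycle (play s₁ s₂ rest) := by
  rintro ⟨k, p, hp⟩
  refine hnc ⟨k, p, cycle_transfer hH h1 h2 hp ?_⟩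
  intro i hig
  have hc := hp.2.1 i
  rw [hig] at hc
  have heq := tileCount_play_eq (rest := rest) h1 h2 g
  rw [if_pos rfl] at heq
  omega

lemma no_cycle_of_key {g : G} {s₁ s₂ : List G} {rest : Board G}
    (hH : HeightsOK (s₁ ::ₘ s₂ ::ₘ rest))
    (hnc : ¬ HasBlockedCycle (s₁ ::ₘ s₂ ::ₘ rest))
    (h1 : s₁.head? = some g) (h2 : s₂.head? = some g)
    (hkey : ∀ (k : ℕ) (p : Fin (k+1) → G),
      BlockedCycle (play s₁ s₂ rest) p → ∀ i, p i ≠ g) :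
    ¬ HasBlockedCycle (play s₁ s₂ rest) := by
  rintro ⟨k, p, hp⟩
  exact hnc ⟨k, p, cycle_transfer hH h1 h2 hp (hkey k p hp)⟩

open Fin.NatCast Fin.CommRing in
lemma fin_cast_succ {k : ℕ} (i₀ : Fin (k+1)) (j : ℕ) :
    i₀ + ((j+1 : ℕ) : Fin (k+1)) + 1 = i₀ + ((j+2 : ℕ) : Fin (k+1)) := by
  push_cast
  ring

def ChainInv (B : Board G) (g x : G) (r : List G) : Prop :=
  r.head? = some x ∧ r.Nodup ∧ (∀ a ∈ r, tileCount B a = 2 ∧ a ≠ g) ∧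
  ∀ j : ℕ, j + 1 < r.length → [r.getD (j+1) x, r.getD j x] ∈ B

lemma ChainInv.len_pos {B : Board G} {g x : G} {r : List G}
    (h : ChainInv B g x r) : 0 < r.length := by
  obtain ⟨h0, _, _, _⟩ := h
  cases r with
  | nil => simp at h0
  | cons a t => simp

lemma ChainInv.getD_zero {B : Board G} {g x : G} {r : List G}
    (h : ChainInv B g x r) : r.getD 0 x = x := by
  obtain ⟨h0, _, _, _⟩ := h
  cases r with
  | nil => simp at h0
  | cons a t => simp at h0 ⊢; exact h0

lemma getD_mem_of_lt {r : List G} {x : G} {j : ℕ} (hj : j < r.length) :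
    r.getD j x ∈ r := by
  rw [List.getD_eq_getElem _ _ hj]
  exact List.getElem_mem hj

lemma nodup_getD_ne {r : List G} (hnd : r.Nodup) {i j : ℕ} {x : G}
    (hi : i < r.length) (hj : j < r.length) (hij : i ≠ j) :
    r.getD i x ≠ r.getD j x := by
  rw [List.getD_eq_getElem _ _ hi, List.getD_eq_getElem _ _ hj]
  intro h
  exact hij (hnd.getElem_inj_iff.mp h)

lemma chain_top {B : Board G} {g x : G} {r : List G}
    (hC : ChainInv B g x r) (hxg : [x, g] ∈ B) {j : ℕ} (hj : j < r.length) :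
    [r.getD j x, if j = 0 then g else r.getD (j-1) x] ∈ B ∧
    (if j = 0 then g else r.getD (j-1) x) ≠ r.getD j x := by
  by_cases hj0 : j = 0
  · subst hj0
    rw [hC.getD_zero]
    simp only [if_pos rfl]
    refine ⟨hxg, ?_⟩
    have hx : x ∈ r := by
      have := hC.getD_zero
      rw [← this]
      exact getD_mem_of_lt hj
    exact fun h => (hC.2.2.1 x hx).2 h.symm
  · obtain ⟨h0, hnd, hmem, hedge⟩ := hC
    have h1j : 1 ≤ j := Nat.pos_of_ne_zero hj0
    have hjj : j - 1 + 1 = j := by omega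
    have he := hedge (j-1) (by omega)
    rw [hjj] at he
    rw [if_neg hj0]
    exact ⟨he, nodup_getD_ne hnd (by omega) hj (by omega)⟩

open Fin.NatCast in
lemma chain_force {B : Board G} {g x : G} {r : List G} {s₁ s₂ : List G}
    {rest : Board G}
    (hB : B = s₁ ::ₘ s₂ ::ₘ rest) (hH : HeightsOK B)
    (h1 : s₁.head? = some g) (h2 : s₂.head? = some g)
    (hb1 : (botsOf B).count g = 1) (hxg : [x, g] ∈ B)
    (hC : ChainInv B g x r)
    {k : ℕ} {p : Fin (k+1) → G} (hp : BlockedCycle (play s₁ s₂ rest) p)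
    {i₀ : Fin (k+1)} (hi₀ : p i₀ = g) :
    ∀ j, j < r.length → p (i₀ + ((j+1 : ℕ) : Fin (k+1))) = r.getD j x := by
  intro j
  induction j with
  | zero =>
    intro hj
    have hedge := hp.2.2 i₀
    rw [hi₀] at hedge
    have hrest : [p (i₀+1), g] ∈ rest := play_two_stack (hB ▸ hH) hedge
    have hBmem : [p (i₀+1), g] ∈ B := by rw [hB]; exact mem_rest_mem hrest
    have hux := botUnique hb1 hBmem hxg
    rw [hC.getD_zero]
    simpa using hux
  | succ j ih =>
    intro hj
    have hjlt : j < r.length := by omega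
    have hPj := ih hjlt
    obtain ⟨hTmem, hTne⟩ := chain_top hC hxg hjlt
    have hamem : r.getD j x ∈ r := getD_mem_of_lt hjlt
    have hacnt : tileCount B (r.getD j x) = 2 := (hC.2.2.1 _ hamem).1
    have hsB : [r.getD (j+1) x, r.getD j x] ∈ B := hC.2.2.2 j hj
    have hedge := hp.2.2 (i₀ + ((j+1 : ℕ) : Fin (k+1)))
    rw [hPj, fin_cast_succ] at hedge
    have hqB : [p (i₀ + ((j+2 : ℕ) : Fin (k+1))), r.getD j x] ∈ B := by
      rw [hB]
      exact mem_rest_mem (play_two_stack (hB ▸ hH) hedge)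
    have hne : [r.getD j x, if j = 0 then g else r.getD (j-1) x]
        ≠ [r.getD (j+1) x, r.getD j x] := by
      intro h
      injection h with h₁ h₂
      injection h₂ with h₃ _
      exact hTne h₃
    have hpin := pin hacnt hTmem List.mem_cons_self hsB
      (by simp) hne hqB (by simp)
    rcases hpin with h | h
    · exfalso
      injection h with h₁ h₂
      injection h₂ with h₃ _
      exact hTne h₃.symm
    · have h₁ : p (i₀ + ((j+2 : ℕ) : Fin (k+1))) = r.getD (j+1) x := by
        injection h
      exact h₁

-- chunk 8: support, revisit-cycle, terminals, chain recursion
def suppOf (B : Board G) : Finset G := (B.bind fun s => (s : Multiset G)).toFinset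

lemma mem_suppOf {B : Board G} {a : G} : a ∈ suppOf B ↔ ∃ s ∈ B, a ∈ s := by
  simp [suppOf]

lemma tileCount_pos_of_mem {B : Board G} {s : List G} {a : G}
    (hs : s ∈ B) (ha : a ∈ s) : 0 < tileCount B a := by
  have hB : B = s ::ₘ B.erase s := (Multiset.cons_erase hs).symm
  have := tileCount_cons s (B.erase s) a
  rw [← hB] at this
  have := List.count_pos_iff.mpr ha
  omega

lemma chain_le_supp {B : Board G} {g x : G} {r : List G}
    (hC : ChainInv B g x r) : r.length ≤ (suppOf B).card := by
  have hnodup := hC.2.1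
  have hsub : r.toFinset ⊆ suppOf B := by
    intro a ha
    have hmem : a ∈ r := List.mem_toFinset.mp ha
    have hcnt : tileCount B a = 2 := (hC.2.2.1 a hmem).1
    exact mem_suppOf.mpr (exists_mem_of_tileCount_pos (by omega))
  calc r.length = r.toFinset.card := (List.toFinset_card_of_nodup hnodup).symm
    _ ≤ _ := Finset.card_le_card hsub

lemma chain_cycle {B : Board G} {g x : G} {r : List G} (hC : ChainInv B g x r)
    {c : G} (hcB : [c, r.getD (r.length - 1) x] ∈ B) (hcr : c ∈ r) :
    HasBlockedCycle B := by
  obtain ⟨i, hi, hieq⟩ := List.mem_iff_getElem.mp hcr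
  have hieq' : r.getD i x = c := by rw [List.getD_eq_getElem _ _ hi]; exact hieq
  set L := r.length with hL
  apply buildCycle (L - i) (by omega) (fun n => r.getD (i + n) x)
  · intro a ha b hb heq
    by_contra hne
    exact nodup_getD_ne hC.2.1 (x := x) (by omega) (by omega)
      (by omega) heq
  · intro a ha
    exact (hC.2.2.1 _ (getD_mem_of_lt (by omega))).1
  · intro n hn
    by_cases hn1 : n + 1 < L - i
    · rw [Nat.mod_eq_of_lt hn1]
      have he := hC.2.2.2 (i + n) (by omega)
      have : i + (n + 1) = i + n + 1 := by omega
      rw [this]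
      exact he
    · have hmeq : n + 1 = L - i := by omega
      rw [hmeq, Nat.mod_self]
      have h1 : i + 0 = i := by omega
      have h2 : i + n = L - 1 := by omega
      rw [h1, h2, hieq']
      exact hcB

open Fin.NatCast in
lemma terminal_g {B : Board G} {g x : G} {r : List G}
    (hH : HeightsOK B) (hnc : ¬ HasBlockedCycle B)
    (ht : 2 ≤ (headsOf B).count (some g))
    (hb1 : (botsOf B).count g = 1) (hxg : [x, g] ∈ B)
    (hC : ChainInv B g x r)
    (hgd : [g, r.getD (r.length - 1) x] ∈ B) :
    ∃ B', Move B B' ∧ ¬ HasBlockedCycle B' := by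
  have hL := hC.len_pos
  set d := r.getD (r.length-1) x with hd
  have hdmem : d ∈ r := getD_mem_of_lt (by omega)
  have hdcnt : tileCount B d = 2 := (hC.2.2.1 _ hdmem).1
  have hdg : d ≠ g := (hC.2.2.1 _ hdmem).2
  obtain ⟨hTmem, hTne⟩ := chain_top hC hxg (show r.length - 1 < r.length by omega)
  have hneTB : [g, d] ≠ [d, if r.length - 1 = 0 then g else r.getD (r.length-1-1) x] := by
    intro h
    injection h with h₁ _
    exact hdg h₁.symm
  have hocc : B.count [g, d] = 1 :=
    pin_count hdcnt hgd (by simp) hTmem List.mem_cons_self hneTB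
  obtain ⟨s₂', rest', hBdec, h2'⟩ := exists_second_head hgd ht
  refine ⟨play [g, d] s₂' rest',
    ⟨g, [g, d], s₂', rest', hBdec, rfl, h2', rfl⟩, ?_⟩
  apply no_cycle_of_key (hBdec ▸ hH) (hBdec ▸ hnc)
    (show ([g, d] : List G).head? = some g from rfl) h2'
  intro k p hp i₀ hig
  exfalso
  have hforce := chain_force hBdec hH (show ([g, d] : List G).head? = some g from rfl)
    h2' hb1 hxg hC hp hig (r.length-1) (by omega)
  have hedge := hp.2.2 (i₀ + (((r.length-1)+1 : ℕ) : Fin (k+1)))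
  rw [hforce, fin_cast_succ] at hedge
  have hqrest : [p (i₀ + (((r.length-1)+2 : ℕ) : Fin (k+1))), d] ∈ rest' :=
    play_two_stack (hBdec ▸ hH) hedge
  have hqB : [p (i₀ + (((r.length-1)+2 : ℕ) : Fin (k+1))), d] ∈ B := by
    rw [hBdec]; exact mem_rest_mem hqrest
  have hpin := pin hdcnt hTmem List.mem_cons_self hgd (by simp)
    (fun h => hneTB h.symm) hqB (by simp)
  rcases hpin with h | h
  · injection h with h₁ h₂
    injection h₂ with h₃ _
    exact hTne h₃.symm
  · injection h with h₁ _
    rw [h₁] at hqrest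
    have hcount : rest'.count [g, d] = 0 := by
      have h' := hocc
      rw [hBdec, Multiset.count_cons, Multiset.count_cons, if_pos rfl] at h'
      split at h' <;> omega
    rw [← Multiset.count_pos, hcount] at hqrest
    omega

open Fin.NatCast in
lemma terminal_w {B : Board G} {g x w : G} {r : List G} {s₁ s₂ : List G}
    {rest : Board G}
    (hBdec : B = s₁ ::ₘ s₂ ::ₘ rest) (hH : HeightsOK B)
    (h1 : s₁.head? = some g) (h2 : s₂.head? = some g)
    (hb1 : (botsOf B).count g = 1) (hxg : [x, g] ∈ B)
    (hC : ChainInv B g x r)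
    (hwd : [w, r.getD (r.length - 1) x] ∈ B) (hwg : w ≠ g)
    (hw4 : tileCount B w = 4) :
    ∀ (k : ℕ) (p : Fin (k+1) → G),
      BlockedCycle (play s₁ s₂ rest) p → ∀ i, p i ≠ g := by
  intro k p hp i₀ hig
  exfalso
  have hL := hC.len_pos
  set d := r.getD (r.length-1) x with hd
  have hdmem : d ∈ r := getD_mem_of_lt (by omega)
  have hdcnt : tileCount B d = 2 := (hC.2.2.1 _ hdmem).1
  obtain ⟨hTmem, hTne⟩ := chain_top hC hxg (show r.length - 1 < r.length by omega)
  have hneTB : [d, if r.length - 1 = 0 then g else r.getD (r.length-1-1) x] ≠ [w, d] := by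
    intro h
    injection h with _ h₂
    injection h₂ with h₃ _
    exact hTne h₃
  have hforce := chain_force hBdec hH h1 h2 hb1 hxg hC hp hig (r.length-1) (by omega)
  have hedge := hp.2.2 (i₀ + (((r.length-1)+1 : ℕ) : Fin (k+1)))
  rw [hforce, fin_cast_succ] at hedge
  have hqB : [p (i₀ + (((r.length-1)+2 : ℕ) : Fin (k+1))), d] ∈ B := by
    rw [hBdec]; exact mem_rest_mem (play_two_stack (hBdec ▸ hH) hedge)
  have hpin := pin hdcnt hTmem List.mem_cons_self hwd (by simp)
    hneTB hqB (by simp)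
  rcases hpin with h | h
  · injection h with h₁ h₂
    injection h₂ with h₃ _
    exact hTne h₃.symm
  · injection h with h₁ _
    have hc2 := hp.2.1 (i₀ + (((r.length-1)+2 : ℕ) : Fin (k+1)))
    rw [h₁] at hc2
    have := tileCount_play_eq (rest := rest) h1 h2 w
    rw [if_neg hwg, ← hBdec] at this
    omega

-- chunk 9: the chain recursion
lemma chain_step {B : Board G} (hH : HeightsOK B)
    (hs : ∀ g : G, tileCount B g = 0 ∨ tileCount B g = 2 ∨ tileCount B g = 4)
    (hnc : ¬ HasBlockedCycle B) {g x : G}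
    (ht : 2 ≤ (headsOf B).count (some g))
    (hb1 : (botsOf B).count g = 1) (hxg : [x, g] ∈ B) :
    ∀ (n : ℕ) (r : List G), ChainInv B g x r →
      (suppOf B).card + 1 ≤ r.length + n →
      ∃ B', Move B B' ∧ ¬ HasBlockedCycle B' := by
  intro n
  induction n with
  | zero =>
    intro r hC hlen
    have := chain_le_supp hC
    omega
  | succ n ih =>
    intro r hC hlen
    have hL := hC.len_pos
    set d := r.getD (r.length - 1) x with hd
    have hdmem : d ∈ r := getD_mem_of_lt (by omega)
    have hdcnt : tileCount B d = 2 := (hC.2.2.1 _ hdmem).1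
    have hdg : d ≠ g := (hC.2.2.1 _ hdmem).2
    obtain ⟨hTmem, hTne⟩ := chain_top hC hxg (show r.length - 1 < r.length by omega)
    set e := if r.length - 1 = 0 then g else r.getD (r.length - 1 - 1) x with he
    rw [← hd] at hTmem hTne
    -- second tile of d
    have hcount1 : ([d, e] : List G).count d = 1 := by
      simp [List.count_cons]
      intro h
      exact absurd h hTne
    have hErase : tileCount (B.erase [d, e]) d = 1 := by
      have hcons : B = [d, e] ::ₘ B.erase [d, e] := (Multiset.cons_erase hTmem).symm
      have h' := tileCount_cons [d, e] (B.erase [d, e]) d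
      rw [← hcons] at h'
      omega
    obtain ⟨s', hs'e, hds'⟩ := exists_mem_of_tileCount_pos (B := B.erase [d, e])
      (g := d) (by omega)
    have hs'B : s' ∈ B := Multiset.mem_of_mem_erase hs'e
    by_cases hhd : s'.head? = some d
    · -- a second top of d : a safe match on the count-2 group d
      have hdec : B = [d, e] ::ₘ s' ::ₘ (B.erase [d, e]).erase s' := by
        conv_lhs => rw [← Multiset.cons_erase hTmem]
        congr 1
        exact (Multiset.cons_erase hs'e).symm
      refine ⟨play [d, e] s' ((B.erase [d, e]).erase s'),
        ⟨d, [d, e], s', _, hdec, rfl, hhd, rfl⟩, ?_⟩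
      exact safe_of_count2 (hdec ▸ hH) (hdec ▸ hnc)
        (show ([d, e] : List G).head? = some d from rfl) hhd (hdec ▸ hdcnt)
    · -- d is buried in s'
      have hdt : d ∈ s'.tail := by
        cases s' with
        | nil => simp at hds'
        | cons a t =>
          rcases List.mem_cons.mp hds' with h | h
          · exfalso; apply hhd; rw [h]; rfl
          · simpa using h
      obtain ⟨c, rfl⟩ := bot_stack hH hs'B hdt
      by_cases hcg : c = g
      · subst hcg
        exact terminal_g hH hnc ht hb1 hxg hC hs'B
      · have hcpos : 0 < tileCount B c :=
          tileCount_pos_of_mem hs'B List.mem_cons_self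
        rcases hs c with h0 | h2 | h4
        · omega
        · by_cases hcr : c ∈ r
          · exact absurd (chain_cycle hC hs'B hcr) hnc
          · -- extend the chain
            apply ih (r ++ [c])
            · refine ⟨?_, ?_, ?_, ?_⟩
              · obtain ⟨h0', _, _, _⟩ := hC
                cases r with
                | nil => simp at h0'
                | cons a t => simpa using h0'
              · rw [List.nodup_append]
                exact ⟨hC.2.1, List.nodup_singleton c, by
                    intro a ha b hb; simp at hb; subst hb; exact fun h => hcr (h ▸ ha)⟩
              · intro a ha
                rcases List.mem_append.mp ha with h | h
                · exact hC.2.2.1 a h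
                · have : a = c := by simpa using h
                  subst this
                  exact ⟨h2, hcg⟩
              · intro j hj
                rw [List.length_append, List.length_singleton] at hj
                by_cases hj1 : j + 1 < r.length
                · rw [List.getD_append _ _ _ _ hj1,
                    List.getD_append _ _ _ _ (by omega)]
                  exact hC.2.2.2 j hj1
                · have hjeq : j + 1 = r.length := by omega
                  rw [List.getD_append_right _ _ _ _ (by omega),
                    List.getD_append _ _ _ _ (by omega)]
                  have h1 : j + 1 - r.length = 0 := by omega
                  have h2' : j = r.length - 1 := by omega
                  rw [h1, h2', ← hd]
                  simpa using hs'B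
            · rw [List.length_append, List.length_singleton]
              omega
        · exact
            let ⟨s₁, s₂, rest, hdec, h1m, h2m⟩ := exists_match ht
            ⟨play s₁ s₂ rest, ⟨g, s₁, s₂, rest, hdec, h1m, h2m, rfl⟩,
              no_cycle_of_key (hdec ▸ hH) (hdec ▸ hnc) h1m h2m
                (terminal_w hdec hH h1m h2m hb1 hxg hC hs'B hcg h4)⟩

-- chunk 10: the safe move lemma
lemma safe_move {B : Board G} (hne : B ≠ 0) (hH : HeightsOK B)
    (hs : ∀ g : G, tileCount B g = 0 ∨ tileCount B g = 2 ∨ tileCount B g = 4)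
    (hnc : ¬ HasBlockedCycle B) :
    ∃ B', Move B B' ∧ ¬ HasBlockedCycle B' := by
  obtain ⟨g, ht⟩ := match_exists hne hH hs hnc
  have hsplit := tileCount_split' B g
  rcases hs g with h0 | h2 | h4
  · omega
  · obtain ⟨s₁, s₂, rest, hdec, h1m, h2m⟩ := exists_match ht
    exact ⟨_, ⟨g, s₁, s₂, rest, hdec, h1m, h2m, rfl⟩,
      safe_of_count2 (hdec ▸ hH) (hdec ▸ hnc) h1m h2m (hdec ▸ h2)⟩
  · have hble : (botsOf B).count g ≤ 2 := by omega
    have hcases : (botsOf B).count g = 0 ∨ (botsOf B).count g = 1 ∨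
        (botsOf B).count g = 2 := by omega
    rcases hcases with hb | hb | hb
    · -- no buried g-tile: any g-match is safe
      obtain ⟨s₁, s₂, rest, hdec, h1m, h2m⟩ := exists_match ht
      refine ⟨_, ⟨g, s₁, s₂, rest, hdec, h1m, h2m, rfl⟩,
        no_cycle_of_key (hdec ▸ hH) (hdec ▸ hnc) h1m h2m ?_⟩
      intro k p hp i hig
      exfalso
      have hedge := hp.2.2 i
      rw [hig] at hedge
      have hmem : [p (i+1), g] ∈ B := by
        rw [hdec]; exact mem_rest_mem (play_two_stack (hdec ▸ hH) hedge)
      have : g ∈ botsOf B := mem_botsOf.mpr ⟨_, hmem, by simp⟩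
      rw [← Multiset.count_pos, hb] at this
      omega
    · -- exactly one buried g-tile
      have hgb : g ∈ botsOf B := by rw [← Multiset.count_pos, hb]; omega
      obtain ⟨s, hsB, hgt⟩ := mem_botsOf.mp hgb
      obtain ⟨x, rfl⟩ := bot_stack hH hsB hgt
      by_cases hxg : x = g
      · -- the buried tile lies under another g-tile: play that stack
        rw [hxg] at hsB
        obtain ⟨s₂', rest', hdec, h2'⟩ := exists_second_head hsB ht
        refine ⟨_, ⟨g, [g, g], s₂', rest', hdec,
          rfl, h2', rfl⟩, no_cycle_of_key (hdec ▸ hH) (hdec ▸ hnc)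
          (show ([g, g] : List G).head? = some g from rfl) h2' ?_⟩
        intro k p hp i hig
        exfalso
        have hedge := hp.2.2 i
        rw [hig] at hedge
        have hqrest : [p (i+1), g] ∈ rest' := play_two_stack (hdec ▸ hH) hedge
        have hmem : [p (i+1), g] ∈ B := by rw [hdec]; exact mem_rest_mem hqrest
        have hpg : p (i+1) = g := botUnique hb hmem hsB
        rw [hpg] at hqrest
        have hocc : B.count [g, g] = 1 := botOccUnique hb hsB
        rw [hdec, Multiset.count_cons, Multiset.count_cons, if_pos rfl] at hocc
        have : rest'.count [g, g] = 0 := by split at hocc <;> omega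
        rw [← Multiset.count_pos, this] at hqrest
        omega
      · rcases hs x with hx0 | hx2 | hx4
        · exact absurd hx0 (by
            have := tileCount_pos_of_mem hsB List.mem_cons_self
            omega)
        · -- the chain case
          apply chain_step hH hs hnc ht hb hsB ((suppOf B).card) [x]
          · refine ⟨rfl, List.nodup_singleton x, ?_, ?_⟩
            · intro a ha
              have : a = x := by simpa using ha
              subst this
              exact ⟨hx2, hxg⟩
            · intro j hj
              simp at hj
          · simp [Nat.add_comm]
        · -- x has four tiles: any g-match is safe
          obtain ⟨s₁, s₂, rest, hdec, h1m, h2m⟩ := exists_match ht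
          refine ⟨_, ⟨g, s₁, s₂, rest, hdec, h1m, h2m, rfl⟩,
            no_cycle_of_key (hdec ▸ hH) (hdec ▸ hnc) h1m h2m ?_⟩
          intro k p hp i hig
          exfalso
          have hedge := hp.2.2 i
          rw [hig] at hedge
          have hmem : [p (i+1), g] ∈ B := by
            rw [hdec]; exact mem_rest_mem (play_two_stack (hdec ▸ hH) hedge)
          have hpg : p (i+1) = x := botUnique hb hmem hsB
          have hc2 := hp.2.1 (i+1)
          rw [hpg] at hc2
          have := tileCount_play_eq (rest := rest) h1m h2m x
          rw [if_neg hxg, ← hdec] at this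
          omega
    · -- two buried g-tiles: the match removes all g-tops
      obtain ⟨s₁, s₂, rest, hdec, h1m, h2m⟩ := exists_match ht
      have hrest0 : (headsOf rest).count (some g) = 0 := by
        have h' := ht
        have heq : (headsOf B).count (some g)
            = 2 + (headsOf rest).count (some g) := by
          rw [hdec, headsOf_cons, headsOf_cons, Multiset.count_cons,
            Multiset.count_cons, h1m, h2m, if_pos rfl]
          omega
        omega
      refine ⟨_, ⟨g, s₁, s₂, rest, hdec, h1m, h2m, rfl⟩,
        no_cycle_of_key (hdec ▸ hH) (hdec ▸ hnc) h1m h2m ?_⟩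
      intro k p hp i hig
      exfalso
      have hedge := hp.2.2 (i - 1)
      have hi1 : i - 1 + 1 = i := sub_add_cancel i 1
      rw [hi1, hig] at hedge
      have hqrest : [g, p (i-1)] ∈ rest := play_two_stack (hdec ▸ hH) hedge
      have : some g ∈ headsOf rest :=
        Multiset.mem_map.mpr ⟨[g, p (i-1)], hqrest, rfl⟩
      rw [← Multiset.count_pos, hrest0] at this
      omega

-- chunk 11: main theorem
lemma totalTiles_pos {B : Board G} (hne : B ≠ 0) (hH : HeightsOK B) :
    0 < totalTiles B := by
  obtain ⟨s, hsB⟩ := Multiset.exists_mem_of_ne_zero hne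
  have hB : B = s ::ₘ B.erase s := (Multiset.cons_erase hsB).symm
  have h' := totalTiles_cons s (B.erase s)
  rw [← hB] at h'
  have hlen : 0 < s.length := List.length_pos_iff.mpr (hH s hsB).1
  omega


/-- on a cycle-free board with stacks of heights one and two and
groups of size two or four, the greedy strategy of always playing a match that
introduces no new blocked cycle empties the board; in particular such a match
exists whenever the board is nonempty. -/
theorem stmt17 (B : Board G) (hH : HeightsOK B)
    (hs : ∀ g : G, tileCount B g = 0 ∨ tileCount B g = 2 ∨ tileCount B g = 4)
    (hnc : ¬ HasBlockedCycle B) :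
    Relation.ReflTransGen (fun C C' => Move C C' ∧ ¬ HasBlockedCycle C') B 0 ∧
    (B ≠ 0 → ∃ B' : Board G, Move B B' ∧ ¬ HasBlockedCycle B') := by
  have main : ∀ (N : ℕ) (C : Board G), totalTiles C ≤ N → HeightsOK C →
      (∀ g : G, tileCount C g = 0 ∨ tileCount C g = 2 ∨ tileCount C g = 4) →
      ¬ HasBlockedCycle C →
      Relation.ReflTransGen (fun C C' => Move C C' ∧ ¬ HasBlockedCycle C') C 0 := by
    intro N
    induction N with
    | zero =>
      intro C hle hH' hs' hnc'
      have hC0 : C = 0 := by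
        by_contra h
        have := totalTiles_pos h hH'
        omega
      rw [hC0]
    | succ N ih =>
      intro C hle hH' hs' hnc'
      by_cases hC0 : C = 0
      · rw [hC0]
      · obtain ⟨C', hmv, hnc''⟩ := safe_move hC0 hH' hs' hnc'
        obtain ⟨g, s₁, s₂, rest, hdec, h1m, h2m, hC'⟩ := hmv
        have hH'' : HeightsOK C' := by
          rw [hC']; exact heightsOK_play (hdec ▸ hH')
        have hcnt : ∀ h : G, tileCount C h
            = tileCount C' h + (if h = g then 2 else 0) := by
          intro h
          rw [hdec, hC']
          exact tileCount_play_eq h1m h2m h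
        have hs'' : ∀ h : G, tileCount C' h = 0 ∨ tileCount C' h = 2 ∨
            tileCount C' h = 4 := by
          intro h
          by_cases hg : h = g
          · subst hg
            have h' := hcnt h
            rw [if_pos rfl] at h'
            rcases hs' h with hcase | hcase | hcase <;> omega
          · have h' := hcnt h
            rw [if_neg hg] at h'
            rcases hs' h with hcase | hcase | hcase <;> omega
        have htt : totalTiles C = totalTiles C' + 2 := by
          rw [hdec, hC']
          exact totalTiles_play_eq h1m h2m
        exact Relation.ReflTransGen.head
          ⟨⟨g, s₁, s₂, rest, hdec, h1m, h2m, hC'⟩, hnc''⟩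
          (ih C' (by omega) hH'' hs'' hnc'')
  exact ⟨main (totalTiles B) B le_rfl hH hs hnc,
    fun hB0 => safe_move hB0 hH hs hnc⟩
end

section
/- Playing a match within a single group cannot create a blocked cycle that avoids that group: if board B contains no blocked cycle and playing a match of group g yields board B' containing a blocked cycle C, then g is one of the groups of C. -/
variable {G : Type*} [DecidableEq G]

lemma tileCount_cons_s19 (a : List G) (M : Board G) (h : G) :
    tileCount (a ::ₘ M) h = a.count h + tileCount M h := by
  simp [tileCount]

lemma tileCount_filter (M : Board G) (h : G) :
    tileCount (Multiset.filter (fun s => s ≠ []) M) h = tileCount M h := by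
  induction M using Multiset.induction with
  | empty => simp [tileCount]
  | cons a M ih =>
    by_cases ha : a = []
    · subst ha; simp [tileCount_cons_s19, Multiset.filter_cons, ih]
    · simp [tileCount_cons_s19, Multiset.filter_cons, ha, ih]

/-- a blocked cycle created by playing a match of group `g` on a
cycle-free board must involve `g` itself. -/
theorem stmt19 (B : Board G) (hH : HeightsOK B)
    (hs : ∀ g : G, tileCount B g = 0 ∨ tileCount B g = 2 ∨ tileCount B g = 4)
    (hnc : ¬ HasBlockedCycle B) (g : G) (s₁ s₂ : List G) (rest : Board G)
    (hB : B = s₁ ::ₘ s₂ ::ₘ rest)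
    (h1 : s₁.head? = some g) (h2 : s₂.head? = some g)
    (k : ℕ) (p : Fin (k + 1) → G)
    (hc : BlockedCycle (play s₁ s₂ rest) p) :
    ∃ i, p i = g := by
  by_contra hne
  push_neg at hne
  obtain ⟨hinj, hcnt, hmem⟩ := hc
  -- s₁ and s₂ have head g
  obtain ⟨t₁, hs₁⟩ : ∃ t, s₁ = g :: t := by
    cases s₁ with
    | nil => simp at h1
    | cons a t => simp at h1; exact ⟨t, by rw [h1]⟩
  obtain ⟨t₂, hs₂⟩ : ∃ t, s₂ = g :: t := by
    cases s₂ with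
    | nil => simp at h2
    | cons a t => simp at h2; exact ⟨t, by rw [h2]⟩
  apply hnc
  refine ⟨k, p, hinj, ?_, ?_⟩
  · intro i
    have := hcnt i
    rw [play, tileCount_filter] at this
    simp only [hs₁, hs₂, List.tail_cons] at this
    rw [hB, hs₁, hs₂, tileCount_cons_s19, tileCount_cons_s19,
      List.count_cons, List.count_cons]
    rw [tileCount_cons_s19, tileCount_cons_s19] at this
    simp only [beq_iff_eq, if_neg (Ne.symm (hne i))]
    omega
  · intro i
    have hm := hmem i
    rw [play, Multiset.mem_filter] at hm
    obtain ⟨hm, -⟩ := hm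
    rw [Multiset.mem_cons, Multiset.mem_cons] at hm
    rcases hm with h | h | h
    · exfalso
      have := (hH s₁ (by rw [hB]; exact Multiset.mem_cons_self _ _)).2
      rw [hs₁] at this h
      simp only [List.tail_cons] at h
      rw [← h] at this
      simp at this
    · exfalso
      have := (hH s₂ (by rw [hB]; exact Multiset.mem_cons_of_mem (Multiset.mem_cons_self _ _))).2
      rw [hs₂] at this h
      simp only [List.tail_cons] at h
      rw [← h] at this
      simp at this
    · rw [hB]
      exact Multiset.mem_cons_of_mem (Multiset.mem_cons_of_mem h)
end
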